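/- arXiv:1712.02113 — 4 statements merged into one kernel-verified Lean document; each statement's English description precedes it below -/
import Mathlib

section
/- Let K be an algebraic number field with ring of integers O_K and let n ≥ 2. If v = (v₁,...,vₙ) and w = (w₁,...,wₙ) are vectors in O_Kⁿ such that the ideal of O_K generated by v₁,...,vₙ is the unit ideal and the ideal generated by w₁,...,wₙ is the unit ideal, then there exists a matrix A ∈ SL(n, O_K) with Av = w. -/
open NumberField IsDedekindDomain

set_option linter.unusedSectionVars false

section Aux

variable {R : Type*} [CommRing R] [IsDomain R] [IsDedekindDomain R]

open IsDedekindDomain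


lemma crt_aux {a b : R} (hb : b ≠ 0) {k : ℕ} (t : Fin k → R)
    (h : Ideal.span ({a, b} ∪ Set.range t) = ⊤) :
    ∃ c : Fin k → R, Ideal.span {a + ∑ j, c j * t j, b} = ⊤ := by
  classical
  have hb' : Ideal.span {b} ≠ (⊥ : Ideal R) := by
    simpa [Ideal.span_singleton_eq_bot] using hb
  have hfin : {v : HeightOneSpectrum R | v.asIdeal ∣ Ideal.span {b}}.Finite :=
    Ideal.finite_factors hb'
  set s : Finset (HeightOneSpectrum R) := hfin.toFinset with hs
  -- for each height-one prime, a good residue vector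
  have key : ∀ M : HeightOneSpectrum R, ∃ r : Fin k → R,
      ∀ c' : Fin k → R, (∀ j, c' j - r j ∈ M.asIdeal) →
        a + ∑ j, c' j * t j ∈ M.asIdeal → b ∈ M.asIdeal →
        ({a, b} ∪ Set.range t : Set R) ⊆ ↑M.asIdeal := by
    intro M
    by_cases ha : a ∈ M.asIdeal
    · by_cases hj : ∃ j', t j' ∉ M.asIdeal
      · obtain ⟨j₀, hj₀⟩ := hj
        refine ⟨(fun x => if x = j₀ then (1:R) else 0), fun c' hc' hsum _ => absurd ?_ hj₀⟩
        have h1 : ∑ j, c' j * t j ∈ M.asIdeal := by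
          have := M.asIdeal.sub_mem hsum ha
          simpa using this
        have h2 : (∑ j, c' j * t j) - t j₀ = ∑ j, (c' j - (fun x => if x = j₀ then (1:R) else 0) j) * t j := by
          rw [Finset.sum_congr rfl (fun j _ => sub_mul (c' j) ((fun x => if x = j₀ then (1:R) else 0) j) (t j)),
            Finset.sum_sub_distrib]
          congr 1
          rw [Finset.sum_congr rfl (fun j _ => by rw [ite_mul, one_mul, zero_mul])]
          simp
        have h3 : (∑ j, c' j * t j) - t j₀ ∈ M.asIdeal := by
          rw [h2]
          exact Ideal.sum_mem _ fun j _ => Ideal.mul_mem_right _ _ (hc' j)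
        have := M.asIdeal.sub_mem h1 h3
        simpa using this
      · push_neg at hj
        refine ⟨0, fun c' _ _ hbM => ?_⟩
        rintro z hz
        rcases hz with hz | ⟨j, rfl⟩
        · rcases hz with rfl | hz
          · exact ha
          · rw [Set.mem_singleton_iff] at hz; subst hz; exact hbM
        · exact hj j
    · refine ⟨0, fun c' hc' hsum _ => absurd ?_ ha⟩
      have h1 : ∑ j, c' j * t j ∈ M.asIdeal :=
        Ideal.sum_mem _ fun j _ => Ideal.mul_mem_right _ _ (by simpa using hc' j)
      have := M.asIdeal.sub_mem hsum h1
      simpa using this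
  choose r hr using key
  have hc : ∀ j : Fin k, ∃ cj : R, ∀ M ∈ s, cj - r M j ∈ M.asIdeal := by
    intro j
    obtain ⟨y, hy⟩ := IsDedekindDomain.exists_forall_sub_mem_ideal (s := s)
      (fun M => M.asIdeal) (fun _ => 1)
      (fun M _ => Ideal.prime_of_isPrime M.ne_bot M.isPrime)
      (fun M _ M' _ hne he => hne (HeightOneSpectrum.ext he))
      (fun M => r M.1 j)
    exact ⟨y, fun M hM => by simpa using hy M hM⟩
  choose c hcs using hc
  refine ⟨c, ?_⟩
  by_contra hne
  obtain ⟨M, hMmax, hle⟩ := Ideal.exists_le_maximal _ hne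
  have hbM : b ∈ M := hle (Ideal.subset_span (by simp))
  have haM : a + ∑ j, c j * t j ∈ M := hle (Ideal.subset_span (by simp))
  have hMbot : M ≠ ⊥ := by
    rintro rfl
    exact hb (by simpa using hbM)
  set v : HeightOneSpectrum R := ⟨M, hMmax.isPrime, hMbot⟩ with hv
  have hvs : v ∈ s := by
    rw [hs, Set.Finite.mem_toFinset]
    exact Ideal.dvd_iff_le.2 ((Ideal.span_singleton_le_iff_mem _).2 hbM)
  have hsub := hr v c (fun j => hcs j v hvs) haM hbM
  have : (⊤ : Ideal R) ≤ M := h ▸ Ideal.span_le.2 hsub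
  exact hMmax.ne_top (top_le_iff.1 this)



lemma span_mulVec_le {ι : Type*} [Fintype ι] (M : Matrix ι ι R) (v : ι → R) :
    Ideal.span (Set.range (M.mulVec v)) ≤ Ideal.span (Set.range v) := by
  rw [Ideal.span_le]
  rintro _ ⟨i, rfl⟩
  simp only [Matrix.mulVec, dotProduct]
  exact Ideal.sum_mem _ fun j _ =>
    Ideal.mul_mem_left _ _ (Ideal.subset_span ⟨j, rfl⟩)

lemma span_mulVec_SL {ι : Type*} [Fintype ι] [DecidableEq ι]
    (A : Matrix.SpecialLinearGroup ι R) (v : ι → R) :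
    Ideal.span (Set.range ((A : Matrix ι ι R).mulVec v)) = Ideal.span (Set.range v) := by
  refine le_antisymm (span_mulVec_le _ _) ?_
  have hv : v = ((A⁻¹ : Matrix.SpecialLinearGroup ι R) : Matrix ι ι R).mulVec
      ((A : Matrix ι ι R).mulVec v) := by
    rw [Matrix.mulVec_mulVec, ← Matrix.SpecialLinearGroup.coe_mul, inv_mul_cancel,
      Matrix.SpecialLinearGroup.coe_one, Matrix.one_mulVec]
  conv_lhs => rw [hv]
  exact span_mulVec_le _ _



lemma stage1 {k : ℕ} (v : Fin 2 ⊕ Fin k → R) (hv : Ideal.span (Set.range v) = ⊤) :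
    ∃ T : Matrix.SpecialLinearGroup (Fin 2 ⊕ Fin k) R,
      ((T : Matrix (Fin 2 ⊕ Fin k) (Fin 2 ⊕ Fin k) R).mulVec v) (Sum.inl 1) ≠ 0 := by
  classical
  by_cases h1 : v (Sum.inl 1) ≠ 0
  · exact ⟨1, by simpa [Matrix.SpecialLinearGroup.coe_one, Matrix.one_mulVec] using h1⟩
  push_neg at h1
  have hex : ∃ i, v i ≠ 0 := by
    by_contra hall
    push_neg at hall
    have hle : Ideal.span (Set.range v) ≤ ⊥ := by
      rw [Ideal.span_le]
      rintro _ ⟨i, rfl⟩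
      simp [hall i, Ideal.mem_bot]
    rw [hv] at hle
    exact top_ne_bot (le_bot_iff.mp hle)
  obtain ⟨i, hi⟩ := hex
  rcases i with i2 | j
  · fin_cases i2
    · refine ⟨⟨Matrix.fromBlocks !![1,0;1,1] 0 0 1, ?_⟩, ?_⟩
      · rw [Matrix.det_fromBlocks_zero₂₁]
        simp [Matrix.det_fin_two_of]
      · show ((Matrix.fromBlocks !![1,0;1,1] 0 0 1).mulVec v) (Sum.inl 1) ≠ 0
        rw [Matrix.fromBlocks_mulVec]
        simp only [Sum.elim_inl, Matrix.zero_mulVec, add_zero, Matrix.mulVec,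
          dotProduct, Fin.sum_univ_two]
        simpa [h1] using hi
    · simp at h1 hi
      exact absurd h1 hi
  · refine ⟨⟨Matrix.fromBlocks 1 (Matrix.of ![0, fun q => if q = j then 1 else 0]) 0 1, ?_⟩, ?_⟩
    · rw [Matrix.det_fromBlocks_zero₂₁]
      simp
    · show ((Matrix.fromBlocks 1 (Matrix.of ![0, fun q => if q = j then 1 else 0]) 0 1).mulVec v)
        (Sum.inl 1) ≠ 0
      rw [Matrix.fromBlocks_mulVec]
      simp only [Sum.elim_inl, Matrix.zero_mulVec, Matrix.one_mulVec, Pi.add_apply,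
        Matrix.mulVec, dotProduct, Matrix.of_apply]
      simpa [h1, Matrix.cons_val_one, Matrix.head_cons, Finset.sum_ite_eq'] using hi

lemma orbit {k : ℕ} (v : Fin 2 ⊕ Fin k → R) (hv : Ideal.span (Set.range v) = ⊤) :
    ∃ A : Matrix.SpecialLinearGroup (Fin 2 ⊕ Fin k) R,
      (A : Matrix (Fin 2 ⊕ Fin k) (Fin 2 ⊕ Fin k) R).mulVec v = Sum.elim ![1,0] 0 := by
  classical
  obtain ⟨T, hT⟩ := stage1 v hv
  set u := (T : Matrix (Fin 2 ⊕ Fin k) (Fin 2 ⊕ Fin k) R).mulVec v with hu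
  have hu_span : Ideal.span (Set.range u) = ⊤ := (span_mulVec_SL T v).trans hv
  obtain ⟨a, ha⟩ : ∃ x : R, x = u (Sum.inl 0) := ⟨_, rfl⟩
  obtain ⟨b, hb⟩ : ∃ x : R, x = u (Sum.inl 1) := ⟨_, rfl⟩
  obtain ⟨t, ht⟩ : ∃ x : Fin k → R, x = u ∘ Sum.inr := ⟨_, rfl⟩
  rw [← hb] at hT
  have hrange : Set.range u = {a, b} ∪ Set.range t := by
    ext z
    constructor
    · rintro ⟨i, rfl⟩
      rcases i with i2 | j
      · fin_cases i2
        · exact Set.mem_union_left _ (Set.mem_insert_iff.2 (Or.inl ha.symm))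
        · exact Set.mem_union_left _
            (Set.mem_insert_iff.2 (Or.inr (Set.mem_singleton_iff.2 hb.symm)))
      · exact Set.mem_union_right _ ⟨j, congrFun ht j⟩
    · rintro (hz | ⟨j, rfl⟩)
      · rcases Set.mem_insert_iff.1 hz with rfl | hz
        · exact ⟨Sum.inl 0, ha.symm⟩
        · rw [Set.mem_singleton_iff] at hz
          subst hz
          exact ⟨Sum.inl 1, hb.symm⟩
      · exact ⟨Sum.inr j, (congrFun ht j).symm⟩
  obtain ⟨c, hc⟩ := crt_aux hT t (by rw [← hrange]; exact hu_span)
  obtain ⟨a', ha'⟩ : ∃ x : R, x = a + ∑ j, c j * t j := ⟨_, rfl⟩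
  rw [← ha'] at hc
  have h1 : (1 : R) ∈ Ideal.span ({a', b} : Set R) := hc.symm ▸ Submodule.mem_top
  obtain ⟨p, q, hpq⟩ := Ideal.mem_span_pair.1 h1
  set T2 : Matrix (Fin 2 ⊕ Fin k) (Fin 2 ⊕ Fin k) R :=
    Matrix.fromBlocks 1 (Matrix.of ![c, 0]) 0 1 with hT2def
  have hT2det : T2.det = 1 := by
    rw [hT2def, Matrix.det_fromBlocks_zero₂₁]
    simp
  have hT2 : T2.mulVec u = Sum.elim ![a', b] t := by
    rw [hT2def, Matrix.fromBlocks_mulVec]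
    funext i
    rcases i with i2 | j
    · fin_cases i2
      · simp only [Sum.elim_inl, Matrix.one_mulVec, Pi.add_apply, Matrix.mulVec,
          dotProduct, Matrix.of_apply, Fin.mk_zero, Fin.mk_one,
          Matrix.cons_val_zero, Matrix.cons_val_one, Matrix.head_cons, Function.comp_apply]
        rw [ha', ha, ht]
        rfl
      · simp only [Sum.elim_inl, Matrix.one_mulVec, Pi.add_apply, Matrix.mulVec,
          dotProduct, Matrix.of_apply, Fin.mk_zero, Fin.mk_one,
          Matrix.cons_val_zero, Matrix.cons_val_one, Matrix.head_cons, Function.comp_apply]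
        simp [hb]
    · simp only [Sum.elim_inr, Matrix.zero_mulVec, Matrix.one_mulVec, Pi.add_apply,
        Pi.zero_apply, zero_add, Function.comp_apply]
      exact (congrFun ht j).symm
  set T3 : Matrix (Fin 2 ⊕ Fin k) (Fin 2 ⊕ Fin k) R :=
    Matrix.fromBlocks 1 0 (Matrix.of fun j => ![-(t j * p), -(t j * q)]) 1 with hT3def
  have hT3det : T3.det = 1 := by
    rw [hT3def, Matrix.det_fromBlocks_zero₁₂]
    simp
  have hT3 : T3.mulVec (Sum.elim ![a', b] t) = Sum.elim ![a', b] 0 := by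
    rw [hT3def, Matrix.fromBlocks_mulVec]
    funext i
    rcases i with i2 | j
    · simp
    · simp only [Sum.elim_inr, Sum.elim_comp_inl, Sum.elim_comp_inr, Matrix.one_mulVec,
        Pi.add_apply, Pi.zero_apply]
      simp only [Matrix.mulVec, dotProduct, Fin.sum_univ_two, Matrix.of_apply,
        Matrix.cons_val_zero, Matrix.cons_val_one, Matrix.head_cons]
      linear_combination (-(t j)) * hpq
  set C : Matrix (Fin 2 ⊕ Fin k) (Fin 2 ⊕ Fin k) R :=
    Matrix.fromBlocks !![p, q; -b, a'] 0 0 1 with hCdef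
  have hCdet : C.det = 1 := by
    rw [hCdef, Matrix.det_fromBlocks_zero₂₁, Matrix.det_fin_two_of]
    simp only [Matrix.det_one, mul_one]
    linear_combination hpq
  have hC : C.mulVec (Sum.elim ![a', b] 0) = Sum.elim ![1, 0] 0 := by
    rw [hCdef, Matrix.fromBlocks_mulVec]
    funext i
    rcases i with i2 | j
    · fin_cases i2
      · simp only [Sum.elim_inl, Sum.elim_comp_inl, Sum.elim_comp_inr, Pi.add_apply,
          Matrix.mulVec, dotProduct, Fin.sum_univ_two, Matrix.of_apply,
          Fin.mk_zero, Fin.mk_one, Matrix.cons_val_zero, Matrix.cons_val_one,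
          Matrix.head_cons, Pi.zero_apply, Matrix.zero_mulVec, add_zero]
        linear_combination hpq
      · simp only [Sum.elim_inl, Sum.elim_comp_inl, Sum.elim_comp_inr, Pi.add_apply,
          Matrix.mulVec, dotProduct, Fin.sum_univ_two, Matrix.of_apply,
          Fin.mk_zero, Fin.mk_one, Matrix.cons_val_zero, Matrix.cons_val_one,
          Matrix.head_cons, Pi.zero_apply, Matrix.zero_mulVec, add_zero]
        ring
    · simp
  refine ⟨(show Matrix.SpecialLinearGroup (Fin 2 ⊕ Fin k) R from ⟨C, hCdet⟩) * (show Matrix.SpecialLinearGroup (Fin 2 ⊕ Fin k) R from ⟨T3, hT3det⟩) * (show Matrix.SpecialLinearGroup (Fin 2 ⊕ Fin k) R from ⟨T2, hT2det⟩) * T, ?_⟩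
  rw [Matrix.SpecialLinearGroup.coe_mul, Matrix.SpecialLinearGroup.coe_mul,
    Matrix.SpecialLinearGroup.coe_mul, ← Matrix.mulVec_mulVec, ← Matrix.mulVec_mulVec,
    ← Matrix.mulVec_mulVec]
  show C.mulVec (T3.mulVec (T2.mulVec u)) = _
  rw [hT2, hT3, hC]

end Aux

theorem stmt5 (K : Type*) [Field K] [NumberField K] (n : ℕ) (hn : 2 ≤ n)
    (v w : Fin n → 𝓞 K)
    (hv : Ideal.span (Set.range v) = ⊤)
    (hw : Ideal.span (Set.range w) = ⊤) :
    ∃ A : Matrix.SpecialLinearGroup (Fin n) (𝓞 K),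
      (A : Matrix (Fin n) (Fin n) (𝓞 K)).mulVec v = w := by
  obtain ⟨k, rfl⟩ : ∃ k, n = 2 + k := ⟨n - 2, by omega⟩
  set e : Fin 2 ⊕ Fin k ≃ Fin (2 + k) := finSumFinEquiv with he
  have hrange : ∀ x : Fin (2 + k) → 𝓞 K, Set.range (x ∘ e) = Set.range x :=
    fun x => Function.Surjective.range_comp e.surjective x
  obtain ⟨Av, hAv⟩ := orbit (v ∘ e) (by rw [hrange]; exact hv)
  obtain ⟨Aw, hAw⟩ := orbit (w ∘ e) (by rw [hrange]; exact hw)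
  set B := Aw⁻¹ * Av with hB
  have hBv : (B : Matrix (Fin 2 ⊕ Fin k) (Fin 2 ⊕ Fin k) (𝓞 K)).mulVec (v ∘ e) = w ∘ e := by
    rw [hB, Matrix.SpecialLinearGroup.coe_mul, ← Matrix.mulVec_mulVec, hAv, ← hAw,
      Matrix.mulVec_mulVec, ← Matrix.SpecialLinearGroup.coe_mul, inv_mul_cancel,
      Matrix.SpecialLinearGroup.coe_one, Matrix.one_mulVec]
  refine ⟨⟨(B : Matrix (Fin 2 ⊕ Fin k) (Fin 2 ⊕ Fin k) (𝓞 K)).submatrix e.symm e.symm, ?_⟩, ?_⟩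
  · rw [Matrix.det_submatrix_equiv_self]
    exact B.2
  · show ((B : Matrix (Fin 2 ⊕ Fin k) (Fin 2 ⊕ Fin k) (𝓞 K)).submatrix e.symm e.symm).mulVec v = w
    rw [Matrix.submatrix_mulVec_equiv]
    have hve : v ∘ e.symm.symm = v ∘ e := by rw [Equiv.symm_symm]
    rw [hve, hBv]
    funext i
    simp
end

section
/- Let F = (F₁,...,Fₙ) ∈ ℂ[X₁,...,Xₙ]ⁿ be a Keller map and let h ∈ ℂ[X₁,...,Xₙ] be a nonconstant polynomial. Then there exists a point x ∈ ℂⁿ with h(F₁(x),...,Fₙ(x)) = 0; in other words, the image F(ℂⁿ) meets every affine hypersurface {h = 0}. -/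
open MvPolynomial

/-- A polynomial map `F = (F₁,...,Fₙ)` is a Keller map if the determinant of its
Jacobian matrix `(∂Fᵢ/∂Xⱼ)` is identically `1`. -/
def IsKeller {R : Type*} [CommRing R] {n : ℕ} (F : Fin n → MvPolynomial (Fin n) R) : Prop :=
  Matrix.det (Matrix.of fun i j => pderiv j (F i)) = 1

lemma my_sub_single_apply {σ : Type*} [DecidableEq σ] (m : σ →₀ ℕ) (i j : σ) :
    (m - Finsupp.single i 1 : σ →₀ ℕ) j = m j - (Finsupp.single i 1 : σ →₀ ℕ) j :=
  Finsupp.tsub_apply m (Finsupp.single i 1) j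

lemma my_coeff_pderiv {σ : Type*} [DecidableEq σ] (i : σ) (m : σ →₀ ℕ) (p : MvPolynomial σ ℂ) :
    coeff m (pderiv i p) = ((m i : ℂ) + 1) * coeff (m + Finsupp.single i 1) p := by
  induction p using MvPolynomial.induction_on' with
  | monomial s a =>
    rw [pderiv_monomial, coeff_monomial, coeff_monomial]
    by_cases hs : s = m + Finsupp.single i 1
    · subst hs
      have h1 : ((m + Finsupp.single i 1) - Finsupp.single i 1 : σ →₀ ℕ) = m := by
        ext j; simp [Finsupp.tsub_apply]
      have h2 : (m + Finsupp.single i 1 : σ →₀ ℕ) i = m i + 1 := by simp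
      rw [if_pos h1, if_pos rfl, h2]
      push_cast
      ring
    · rw [if_neg hs, mul_zero]
      by_cases hs2 : (s - Finsupp.single i 1 : σ →₀ ℕ) = m
      · rw [if_pos hs2]
        have hsi : s i = 0 := by
          by_contra hne
          apply hs
          ext j
          have hj := congrArg (fun f => f j) hs2
          simp only [Finsupp.coe_tsub, Pi.sub_apply] at hj
          rw [Finsupp.add_apply]
          by_cases hji : j = i
          · subst hji
            rw [Finsupp.single_eq_same] at hj ⊢
            omega
          · rw [Finsupp.single_eq_of_ne' (Ne.symm hji)] at hj ⊢
            omega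
        rw [hsi]
        simp
      · rw [if_neg hs2]
  | add p q hp hq =>
    simp only [map_add, coeff_add, hp, hq, mul_add]

lemma my_eq_C_of_totalDegree_eq_zero {σ : Type*} (p : MvPolynomial σ ℂ)
    (hp : p.totalDegree = 0) : p = C (coeff 0 p) := by
  classical
  rw [totalDegree_eq_zero_iff] at hp
  ext m
  rw [coeff_C]
  by_cases hm : (0 : σ →₀ ℕ) = m
  · rw [if_pos hm, ← hm]
  · rw [if_neg hm]
    by_contra hne
    exact hm (Finsupp.ext fun j => (hp m (mem_support_iff.mpr hne) j).symm)

lemma my_eq_C_of_pderiv_eq_zero {σ : Type*} [DecidableEq σ] (p : MvPolynomial σ ℂ)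
    (hp : ∀ i, pderiv i p = 0) : p = C (coeff 0 p) := by
  ext m
  rw [coeff_C]
  by_cases hm : (0 : σ →₀ ℕ) = m
  · rw [if_pos hm, ← hm]
  · rw [if_neg hm]
    have hex : ∃ i, m i ≠ 0 := by
      by_contra hc
      push_neg at hc
      exact hm (Finsupp.ext fun i => (hc i).symm)
    obtain ⟨i, hi⟩ := hex
    set m' : σ →₀ ℕ := m - Finsupp.single i 1 with hm'
    have hadd : m' + Finsupp.single i 1 = m := by
      ext j
      rw [Finsupp.add_apply, hm', my_sub_single_apply]
      by_cases hji : j = i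
      · subst hji; rw [Finsupp.single_eq_same]; omega
      · rw [Finsupp.single_eq_of_ne' (Ne.symm hji)]; omega
    have hkey := my_coeff_pderiv i m' p
    rw [hp i, coeff_zero, hadd] at hkey
    have hne : ((m' i : ℂ) + 1) ≠ 0 := Nat.cast_add_one_ne_zero (m' i)
    exact (mul_eq_zero.mp hkey.symm).resolve_left hne

lemma my_totalDegree_pderiv_le {σ : Type*} [DecidableEq σ] (i : σ) (p : MvPolynomial σ ℂ)
    {d : ℕ} (hp : p.totalDegree ≤ d + 1) : (pderiv i p).totalDegree ≤ d := by
  apply Finset.sup_le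
  intro m hm
  rw [mem_support_iff, my_coeff_pderiv] at hm
  have h2 : coeff (m + Finsupp.single i 1) p ≠ 0 := by
    intro h0; rw [h0, mul_zero] at hm; exact hm rfl
  have h3 := MvPolynomial.le_totalDegree (mem_support_iff.mpr h2)
  have hsum : (m + Finsupp.single i 1).sum (fun _ e => e) = m.sum (fun _ e => e) + 1 := by
    rw [Finsupp.sum_add_index' (fun _ => rfl) (fun _ _ _ => rfl)]
    simp
  omega

lemma my_pderiv_aeval {n : ℕ} (F : Fin n → MvPolynomial (Fin n) ℂ)
    (p : MvPolynomial (Fin n) ℂ) (i : Fin n) :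
    pderiv i (aeval F p) = ∑ j, aeval F (pderiv j p) * pderiv i (F j) := by
  induction p using MvPolynomial.induction_on with
  | C a =>
    have : (aeval F) (C a : MvPolynomial (Fin n) ℂ) = C a := by
      rw [aeval_C]; rfl
    simp [this]
  | add p q hp hq =>
    rw [map_add, map_add, hp, hq, ← Finset.sum_add_distrib]
    exact Finset.sum_congr rfl fun j _ => by simp [add_mul]
  | mul_X p j hp =>
    simp only [map_mul, aeval_X, pderiv_mul, hp, map_add, add_mul, Finset.sum_add_distrib,
      Finset.sum_mul, pderiv_X, Pi.single_apply]
    refine congrArg₂ (· + ·) ?_ ?_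
    · exact Finset.sum_congr rfl fun j' _ => by ring
    · rw [Finset.sum_congr rfl (fun j' _ => by
        rw [apply_ite (aeval F), map_one, map_zero, mul_ite, mul_one, mul_zero, ite_mul, zero_mul]),
        Finset.sum_ite_eq]
      simp

lemma my_aeval_C' {n : ℕ} (F : Fin n → MvPolynomial (Fin n) ℂ) (c : ℂ) :
    aeval F (C c : MvPolynomial (Fin n) ℂ) = C c := by
  rw [aeval_C]; rfl

lemma my_aeval_eq_zero {n : ℕ} (F : Fin n → MvPolynomial (Fin n) ℂ) (hF : IsKeller F) :
    ∀ (d : ℕ) (p : MvPolynomial (Fin n) ℂ), p.totalDegree ≤ d → aeval F p = 0 → p = 0 := by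
  intro d
  induction d with
  | zero =>
    intro p hdeg h0
    have hp := my_eq_C_of_totalDegree_eq_zero p (Nat.le_zero.mp hdeg)
    rw [hp, my_aeval_C'] at h0
    have hc : coeff 0 p = 0 := by
      have := congrArg constantCoeff h0
      simpa using this
    rw [hp, hc, map_zero]
  | succ d ih =>
    intro p hdeg h0
    set M : Matrix (Fin n) (Fin n) (MvPolynomial (Fin n) ℂ) :=
      Matrix.of fun i j => pderiv j (F i) with hM
    have hdet : IsUnit M.det := by rw [hF]; exact isUnit_one
    set v : Fin n → MvPolynomial (Fin n) ℂ := fun j => aeval F (pderiv j p) with hv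
    have hvM : Matrix.vecMul v M = 0 := by
      funext i
      have hchain := my_pderiv_aeval F p i
      rw [h0, map_zero] at hchain
      simp only [Matrix.vecMul, dotProduct, hM, hv, Matrix.of_apply, Pi.zero_apply]
      exact hchain.symm
    have hvz : v = 0 := by
      have h1 : v = Matrix.vecMul v (M * M⁻¹) := by
        rw [Matrix.mul_nonsing_inv M hdet, Matrix.vecMul_one]
      rw [← Matrix.vecMul_vecMul, hvM, Matrix.zero_vecMul] at h1
      exact h1
    have hpder : ∀ j, pderiv j p = 0 := by
      intro j
      apply ih (pderiv j p) (my_totalDegree_pderiv_le j p hdeg)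
      have := congrFun hvz j
      simpa [hv] using this
    have hp := my_eq_C_of_pderiv_eq_zero p hpder
    rw [hp, my_aeval_C'] at h0
    have hc : coeff 0 p = 0 := by
      have := congrArg constantCoeff h0
      simpa using this
    rw [hp, hc, map_zero]

lemma my_isUnit_eq_C : ∀ (n : ℕ) (g : MvPolynomial (Fin n) ℂ), IsUnit g → ∃ c, g = C c := by
  intro n
  induction n with
  | zero => exact fun g _ => ⟨g.coeff 0, eq_C_of_isEmpty g⟩
  | succ n ih =>
    intro g hg
    have hg' : IsUnit (finSuccEquiv ℂ n g) := hg.map (finSuccEquiv ℂ n)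
    rw [Polynomial.isUnit_iff] at hg'
    obtain ⟨r, hr, hrg⟩ := hg'
    obtain ⟨c, hc⟩ := ih r hr
    refine ⟨c, (finSuccEquiv ℂ n).injective ?_⟩
    rw [← hrg, hc]
    simp [MvPolynomial.finSuccEquiv_apply]

theorem stmt7 {n : ℕ} (F : Fin n → MvPolynomial (Fin n) ℂ) (hF : IsKeller F)
    (h : MvPolynomial (Fin n) ℂ) (hh : ∀ c : ℂ, h ≠ C c) :
    ∃ x : Fin n → ℂ, eval (fun i => eval x (F i)) h = 0 := by
  classical
  have hinj : ∀ p : MvPolynomial (Fin n) ℂ, aeval F p = 0 → p = 0 :=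
    fun p => my_aeval_eq_zero F hF p.totalDegree p le_rfl
  set g := aeval F h with hg
  have hgC : ∀ c : ℂ, g ≠ C c := by
    intro c hc
    apply hh c
    have h1 : aeval F (h - C c) = 0 := by
      rw [map_sub, ← hg, hc, my_aeval_C', sub_self]
    exact sub_eq_zero.mp (hinj _ h1)
  have hunit : ¬ IsUnit g := fun hu => (my_isUnit_eq_C n g hu).elim fun c hc => hgC c hc
  have hspan : Ideal.span {g} ≠ ⊤ := fun ht => hunit (Ideal.span_singleton_eq_top.mp ht)
  obtain ⟨M, hM, hle⟩ := Ideal.exists_le_maximal _ hspan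
  obtain ⟨x, hx⟩ := (MvPolynomial.isMaximal_iff_eq_vanishingIdeal_singleton (I := M)).mp hM
  refine ⟨x, ?_⟩
  have hgM : g ∈ M := hle (Ideal.subset_span rfl)
  rw [hx] at hgM
  have hev : eval x g = 0 := (MvPolynomial.mem_vanishingIdeal_singleton_iff x g).mp hgM
  have hcomp : ((eval x).comp (algebraMap ℂ (MvPolynomial (Fin n) ℂ))) = RingHom.id ℂ := by
    ext c; simp [algebraMap_eq]
  rw [← hev, hg, aeval_def, eval_eval₂, hcomp]
  exact (eval₂_id _).symm
end

section
/- Let K be an algebraic number field with ring of integers O_K and let F ∈ O_K[X₁,...,Xₙ]ⁿ be a Keller map with F(0) = 0. If G ∈ K[X₁,...,Xₙ]ⁿ satisfies G(0) = 0, Fᵢ(G₁,...,Gₙ) = Xᵢ and Gᵢ(F₁,...,Fₙ) = Xᵢ for all i, then all coefficients of G₁,...,Gₙ lie in O_K. -/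
open MvPolynomial NumberField

section Aux

variable {K : Type*} [Field K] {n : ℕ}

private def dg {n : ℕ} (m : Fin n →₀ ℕ) : ℕ := ∑ j, m j

private lemma dg_add {a b : Fin n →₀ ℕ} : dg (a + b) = dg a + dg b := by
  simp [dg, Finsupp.add_apply, Finset.sum_add_distrib]

private lemma dg_eq_zero {m : Fin n →₀ ℕ} (h : dg m = 0) : m = 0 := by
  ext j
  have := (Finset.sum_eq_zero_iff).mp h j (Finset.mem_univ j)
  simpa using this

private lemma dg_single {j : Fin n} : dg (Finsupp.single j 1) = 1 := by
  simp [dg, Finsupp.single_apply]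

private lemma exists_single_of_dg_one {u : Fin n →₀ ℕ} (h : dg u = 1) :
    ∃ j, u = Finsupp.single j 1 := by
  obtain ⟨j, hj⟩ : ∃ j, u j ≠ 0 := by
    by_contra hc
    push_neg at hc
    exact absurd h (by simp [dg, hc])
  have huj : u j ≤ 1 := h ▸ Finset.single_le_sum (f := fun k => u k) (fun _ _ => Nat.zero_le _) (Finset.mem_univ j)
  have huj1 : u j = 1 := le_antisymm huj (Nat.one_le_iff_ne_zero.mpr hj)
  refine ⟨j, ?_⟩
  ext k
  rcases eq_or_ne k j with rfl | hk
  · simp [huj1]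
  · have h2 : ∑ k, u k = u j + ∑ k ∈ Finset.univ.erase j, u k := by
      rw [Finset.add_sum_erase _ _ (Finset.mem_univ j)]
    have h3 : ∑ k ∈ Finset.univ.erase j, u k = 0 := by
      have := h; rw [dg] at this; omega
    have : u k = 0 :=
      (Finset.sum_eq_zero_iff).mp h3 k (Finset.mem_erase.mpr ⟨hk, Finset.mem_univ k⟩)
    simp [this, Finsupp.single_apply, (Ne.symm hk : j ≠ k)]

/-- peel one factor -/
private lemma peel {u : Fin n →₀ ℕ} {j : Fin n} (hj : u j ≠ 0) (G : Fin n → MvPolynomial (Fin n) K) :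
    u.prod (fun j e => G j ^ e) =
      G j * ((u - Finsupp.single j 1).prod fun j e => G j ^ e) := by
  have hle : Finsupp.single j 1 ≤ u := Finsupp.single_le_iff.mpr (Nat.one_le_iff_ne_zero.mpr hj)
  have hu : u = Finsupp.single j 1 + (u - Finsupp.single j 1) := by
    rw [add_tsub_cancel_of_le hle]
  calc u.prod (fun j e => G j ^ e)
      = (Finsupp.single j 1 + (u - Finsupp.single j 1)).prod (fun j e => G j ^ e) := by rw [← hu]
    _ = (Finsupp.single j 1).prod (fun j e => G j ^ e) * (u - Finsupp.single j 1).prod (fun j e => G j ^ e) := by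
        apply Finsupp.prod_add_index' (by intro; simp) (by intro a b₁ b₂; rw [pow_add])
    _ = _ := by rw [Finsupp.prod_single_index (by simp), pow_one]

private lemma coeff_prod_eq_zero (G : Fin n → MvPolynomial (Fin n) K)
    (hG0 : ∀ i, coeff 0 (G i) = 0) :
    ∀ k (u : Fin n →₀ ℕ), dg u = k → ∀ m : Fin n →₀ ℕ, dg m < k →
      coeff m (u.prod fun j e => G j ^ e) = 0 := by
  intro k
  induction k using Nat.strong_induction_on with
  | _ k IH =>
    intro u hu m hm
    obtain ⟨j, hj⟩ : ∃ j, u j ≠ 0 := by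
      by_contra hc; push_neg at hc
      have h0 : u = 0 := by ext j; simp [hc]
      subst h0; simp [dg] at hu; omega
    rw [peel hj, coeff_mul]
    apply Finset.sum_eq_zero
    rintro ⟨a, b⟩ hab
    rw [Finset.HasAntidiagonal.mem_antidiagonal] at hab
    rcases eq_or_ne a 0 with rfl | ha
    · simp [hG0 j]
    · have hdg : dg a + dg b = dg m := by rw [← dg_add, hab]
      have ha1 : 1 ≤ dg a := by
        rcases Nat.eq_zero_or_pos (dg a) with h0 | h
        · exact absurd (dg_eq_zero h0) ha
        · exact h
      have hu' : dg (u - Finsupp.single j 1) = k - 1 := by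
        have h2 : dg (Finsupp.single j 1 + (u - Finsupp.single j 1)) = k := by
          rw [add_tsub_cancel_of_le (Finsupp.single_le_iff.mpr (Nat.one_le_iff_ne_zero.mpr hj))]
          exact hu
        rw [dg_add, dg_single] at h2; omega
      have hz : coeff b ((u - Finsupp.single j 1).prod fun j e => G j ^ e) = 0 :=
        IH (k-1) (by omega) _ hu' _ (by omega)
      rw [hz, mul_zero]

private lemma coeff_prod_mem (A : Subring K) (G : Fin n → MvPolynomial (Fin n) K)
    (hG0 : ∀ i, coeff 0 (G i) = 0) (d : ℕ)
    (IH : ∀ m : Fin n →₀ ℕ, dg m < d → ∀ i, coeff m (G i) ∈ A) :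
    ∀ k, 1 ≤ k → ∀ u : Fin n →₀ ℕ, dg u = k → ∀ m : Fin n →₀ ℕ, dg m + 2 ≤ d + k →
      coeff m (u.prod fun j e => G j ^ e) ∈ A := by
  intro k
  induction k using Nat.strong_induction_on with
  | _ k IHk =>
    intro hk u hu m hm
    rcases eq_or_lt_of_le hk with h1 | h2
    · obtain ⟨j, rfl⟩ := exists_single_of_dg_one (hu.trans h1.symm)
      rw [Finsupp.prod_single_index (by simp), pow_one]
      exact IH m (by omega) j
    · obtain ⟨j, hj⟩ : ∃ j, u j ≠ 0 := by
        by_contra hc; push_neg at hc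
        have h0 : u = 0 := by ext j; simp [hc]
        subst h0; simp [dg] at hu; omega
      have hu' : dg (u - Finsupp.single j 1) = k - 1 := by
        have hh : dg (Finsupp.single j 1 + (u - Finsupp.single j 1)) = k := by
          rw [add_tsub_cancel_of_le (Finsupp.single_le_iff.mpr (Nat.one_le_iff_ne_zero.mpr hj))]
          exact hu
        rw [dg_add, dg_single] at hh; omega
      rw [peel hj, coeff_mul]
      apply sum_mem
      rintro ⟨a, b⟩ hab
      rw [Finset.HasAntidiagonal.mem_antidiagonal] at hab
      rcases eq_or_ne a 0 with rfl | ha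
      · rw [hG0 j, zero_mul]; exact zero_mem A
      · have hdg : dg a + dg b = dg m := by rw [← dg_add, hab]
        have ha1 : 1 ≤ dg a := by
          rcases Nat.eq_zero_or_pos (dg a) with h0 | h
          · exact absurd (dg_eq_zero h0) ha
          · exact h
        rcases lt_or_ge (dg b) (k-1) with hb | hb
        · rw [coeff_prod_eq_zero G hG0 (k-1) _ hu' b hb, mul_zero]
          exact zero_mem A
        · exact mul_mem (IH a (by omega) j)
            (IHk (k-1) (by omega) (by omega) _ hu' b (by omega))

private lemma constCoeff_pderiv {R : Type*} [CommRing R] {n : ℕ} (j : Fin n)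
    (p : MvPolynomial (Fin n) R) :
    constantCoeff (pderiv j p) = coeff (Finsupp.single j 1) p := by
  induction p using MvPolynomial.induction_on' with
  | add p q hp hq => simp [map_add, hp, hq]
  | monomial u a =>
    rw [pderiv_monomial, coeff_monomial, constantCoeff_monomial]
    rcases eq_or_ne u (Finsupp.single j 1) with rfl | hne
    · simp
    · rw [if_neg hne]
      rcases eq_or_ne (u j) 0 with h0 | h0
      · simp [h0]
      · rw [if_neg]
        intro hzero
        apply hne
        ext k
        have hk := DFunLike.congr_fun hzero k
        rw [Finsupp.tsub_apply, Finsupp.coe_zero, Pi.zero_apply] at hk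
        rcases eq_or_ne k j with rfl | hkj
        · simp only [Finsupp.single_eq_same] at hk ⊢
          omega
        · have : Finsupp.single j 1 k = 0 := Finsupp.single_eq_of_ne hkj
          rw [this] at hk ⊢
          omega

end Aux


theorem stmt10 (K : Type*) [Field K] [NumberField K] {n : ℕ}
    (F : Fin n → MvPolynomial (Fin n) (𝓞 K)) (hF : IsKeller F)
    (hF0 : ∀ i, eval (0 : Fin n → 𝓞 K) (F i) = 0)
    (G : Fin n → MvPolynomial (Fin n) K)
    (hG0 : ∀ i, eval (0 : Fin n → K) (G i) = 0)
    (hFG : ∀ i, aeval G (map (algebraMap (𝓞 K) K) (F i)) = X i)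
    (hGF : ∀ i, aeval (fun j => map (algebraMap (𝓞 K) K) (F j)) (G i) = X i) :
    ∀ i m, (G i).coeff m ∈ (algebraMap (𝓞 K) K).range := by
  classical
  set f := algebraMap (𝓞 K) K with hf
  set A : Subring K := f.range with hA
  have hG0' : ∀ i, coeff 0 (G i) = 0 := by
    intro i
    have := hG0 i
    rwa [eval_zero] at this
  -- the linear-part matrix
  set L : Matrix (Fin n) (Fin n) (𝓞 K) :=
    Matrix.of (fun i j => coeff (Finsupp.single j 1) (F i)) with hL
  have hdet : L.det = 1 := by
    have h1 := congrArg constantCoeff hF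
    rw [RingHom.map_det, map_one, RingHom.mapMatrix_apply] at h1
    have h2 : (Matrix.of fun i j => pderiv j (F i)).map (constantCoeff) = L := by
      apply Matrix.ext
      intro i j
      simp only [Matrix.map_apply, Matrix.of_apply, hL]
      exact constCoeff_pderiv j (F i)
    rwa [h2] at h1
  have hML : L.adjugate * L = 1 := by
    rw [Matrix.adjugate_mul, hdet, one_smul]
  have hML' : (L.adjugate.map f) * (L.map f) = 1 := by
    have := congrArg f.mapMatrix hML
    rwa [map_mul, map_one, RingHom.mapMatrix_apply, RingHom.mapMatrix_apply] at this
  -- main induction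
  suffices H : ∀ d (m : Fin n →₀ ℕ), dg m = d → ∀ i, coeff m (G i) ∈ A by
    intro i m; exact H (dg m) m rfl i
  intro d
  induction d using Nat.strong_induction_on with
  | _ d IHd =>
    intro m hmd i0
    have IH : ∀ m' : Fin n →₀ ℕ, dg m' < d → ∀ i, coeff m' (G i) ∈ A := by
      intro m' h i; exact IHd (dg m') (hmd ▸ h) m' rfl i
    rcases eq_or_ne m 0 with rfl | hm0
    · rw [hG0' i0]; exact zero_mem A
    -- key identity for each i
    have key : ∀ i, ∑ u ∈ (map f (F i)).support,
        coeff u (map f (F i)) * coeff m (u.prod fun j e => G j ^ e) = coeff m (X i) := by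
      intro i
      rw [← hFG i]
      conv_rhs => rw [(map f (F i)).as_sum]
      rw [map_sum, coeff_sum]
      apply Finset.sum_congr rfl
      intro u hu
      rw [aeval_monomial, algebraMap_eq, coeff_C_mul]
    set v : Fin n → K := fun j => coeff m (G j) with hv
    have hXA : ∀ i : Fin n, coeff m (X i : MvPolynomial (Fin n) K) ∈ A := by
      intro i
      rw [coeff_X']
      split
      · exact one_mem A
      · exact zero_mem A
    have hw : ∀ i, (Matrix.mulVec (L.map f) v) i ∈ A := by
      intro i
      have hsplit := Finset.sum_filter_add_sum_filter_not (map f (F i)).support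
        (fun u => dg u = 1) (fun u => coeff u (map f (F i)) * coeff m (u.prod fun j e => G j ^ e))
      have hT2 : ∑ u ∈ (map f (F i)).support.filter (fun u => ¬ dg u = 1),
          coeff u (map f (F i)) * coeff m (u.prod fun j e => G j ^ e) ∈ A := by
        apply sum_mem
        intro u hu
        rw [Finset.mem_filter] at hu
        apply mul_mem
        · rw [coeff_map]; exact ⟨_, rfl⟩
        · rcases Nat.lt_or_ge (dg u) 2 with hlt | hge
          · have h0 : dg u = 0 := by
              have := hu.2; omega
            have h0' : u = 0 := dg_eq_zero h0
            subst h0'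
            rw [Finsupp.prod_zero_index, coeff_one, if_neg (Ne.symm hm0)]
            exact zero_mem A
          · exact coeff_prod_mem A G hG0' d IH (dg u) (by omega) u rfl m (by omega)
      have hT1 : ∑ u ∈ (map f (F i)).support.filter (fun u => dg u = 1),
          coeff u (map f (F i)) * coeff m (u.prod fun j e => G j ^ e) = (Matrix.mulVec (L.map f) v) i := by
        have hsub : (map f (F i)).support.filter (fun u => dg u = 1) ⊆
            Finset.univ.image (fun j : Fin n => Finsupp.single j 1) := by
          intro u hu
          rw [Finset.mem_filter] at hu
          obtain ⟨j, rfl⟩ := exists_single_of_dg_one hu.2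
          exact Finset.mem_image.mpr ⟨j, Finset.mem_univ j, rfl⟩
        rw [Finset.sum_subset hsub]
        · rw [Finset.sum_image (fun x _ y _ h => Finsupp.single_left_injective one_ne_zero h)]
          rw [Matrix.mulVec, dotProduct]
          apply Finset.sum_congr rfl
          intro j _
          rw [Finsupp.prod_single_index (by simp), pow_one, coeff_map]
          rfl
        · intro u hu hnu
          rw [Finset.mem_image] at hu
          obtain ⟨j, _, rfl⟩ := hu
          have hns : Finsupp.single j 1 ∉ (map f (F i)).support := by
            intro hmem
            exact hnu (Finset.mem_filter.mpr ⟨hmem, dg_single⟩)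
          rw [MvPolynomial.notMem_support_iff.mp hns, zero_mul]
      rw [hT1] at hsplit
      have : (Matrix.mulVec (L.map f) v) i = coeff m (X i : MvPolynomial (Fin n) K) -
          ∑ u ∈ (map f (F i)).support.filter (fun u => ¬ dg u = 1),
            coeff u (map f (F i)) * coeff m (u.prod fun j e => G j ^ e) := by
        rw [← key i, ← hsplit]; ring
      rw [this]
      exact sub_mem (hXA i) hT2
    have hv' : v = Matrix.mulVec (L.adjugate.map f) (Matrix.mulVec (L.map f) v) := by
      rw [Matrix.mulVec_mulVec, hML', Matrix.one_mulVec]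
    have hfin : coeff m (G i0) = ∑ i, (L.adjugate.map f) i0 i * (Matrix.mulVec (L.map f) v) i := by
      conv_lhs => rw [show coeff m (G i0) = v i0 from rfl, hv']
      rw [Matrix.mulVec, dotProduct]
    rw [hfin]
    apply sum_mem
    intro i _
    exact mul_mem ⟨L.adjugate i0 i, rfl⟩ (hw i)
end

section
/- Let bᵢⱼ ∈ ℤ (1 ≤ i,j ≤ n) be such that the map F with Fᵢ(X) = Xᵢ + (Σⱼ bᵢⱼXⱼ)³ is a Keller map, let w = (w₁,...,wₙ) ∈ ℤⁿ have all wᵢ ≠ 0, and set vᵢ := wᵢ³ and δ := v₁v₂⋯vₙ. Define aᵢⱼ := wᵢ·(Π_{k≠i} w_k²)·wⱼ³·bᵢⱼ ∈ ℤ. Then the map G with Gᵢ(X) = Xᵢ + (Σⱼ aᵢⱼXⱼ)³ is a Keller map in ℤ[X₁,...,Xₙ]ⁿ, and for every x ∈ ℤⁿ with G₁(x) = G₂(x) = ⋯ = Gₙ(x) the point y := (δv₁x₁, δv₂x₂, ..., δvₙxₙ) satisfies F(y) = t·v for some t ∈ ℚ. -/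
open MvPolynomial

/-- The polynomial map of linear cubic form `Fᵢ(X) = Xᵢ + (aᵢ₁X₁ + ⋯ + aᵢₙXₙ)³`. -/
noncomputable def cubicLinear {R : Type*} [CommRing R] {n : ℕ} (a : Fin n → Fin n → R) :
    Fin n → MvPolynomial (Fin n) R :=
  fun i => X i + (∑ j, C (a i j) * X j) ^ 3

private lemma pderiv_cubicLinear {R : Type*} [CommRing R] {n : ℕ} (a : Fin n → Fin n → R)
    (i j : Fin n) :
    pderiv j (cubicLinear a i) =
      (if i = j then 1 else 0) + 3 * (∑ l, C (a i l) * X l) ^ 2 * C (a i j) := by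
  have h1 : pderiv j (X i : MvPolynomial (Fin n) R) = if i = j then 1 else 0 := by
    rcases eq_or_ne i j with h | h
    · subst h; simp
    · simp [h]
  have h2 : pderiv j (∑ l, C (a i l) * X l : MvPolynomial (Fin n) R) = C (a i j) := by
    rw [map_sum, Finset.sum_eq_single j]
    · simp [pderiv_C_mul]
    · intro l _ hl; simp [pderiv_C_mul, pderiv_X_of_ne hl]
    · simp
  simp only [cubicLinear, map_add, h1, pderiv_pow, h2]
  norm_num

private lemma C_mul_X_eq {n : ℕ} {x y z u : ℚ} (h : x * y = z * u) (l : Fin n) :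
    C x * (C y * X l) = C z * (C u * (X l : MvPolynomial (Fin n) ℚ)) := by
  rw [← mul_assoc, ← C_mul, h, C_mul, mul_assoc]

private lemma C_mul_X_eq' {n : ℕ} {x z u : ℚ} (h : x = z * u) (l : Fin n) :
    C x * X l = C z * (C u * (X l : MvPolynomial (Fin n) ℚ)) := by
  rw [h, C_mul, mul_assoc]

theorem stmt15 {n : ℕ} (b : Fin n → Fin n → ℤ)
    (hF : IsKeller (cubicLinear b))
    (w : Fin n → ℤ) (hw : ∀ i, w i ≠ 0)
    (v : Fin n → ℤ) (hv : ∀ i, v i = w i ^ 3)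
    (δ : ℤ) (hδ : δ = ∏ i, v i)
    (a : Fin n → Fin n → ℤ)
    (ha : ∀ i j, a i j = w i * (∏ k ∈ Finset.univ.erase i, w k ^ 2) * w j ^ 3 * b i j) :
    IsKeller (cubicLinear a) ∧
    ∀ x : Fin n → ℤ,
      (∀ i j, eval x (cubicLinear a i) = eval x (cubicLinear a j)) →
      ∃ t : ℚ, ∀ i, ((eval (fun k => δ * v k * x k) (cubicLinear b i) : ℤ) : ℚ)
        = t * (v i : ℚ) := by
  classical
  set c : Fin n → ℤ := fun i => w i * ∏ k ∈ Finset.univ.erase i, w k ^ 2 with hc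
  have hkey : ∀ i, v i * c i ^ 3 = δ ^ 2 := by
    intro i
    have h1 : w i ^ 2 * ∏ k ∈ Finset.univ.erase i, w k ^ 2 = ∏ k, w k ^ 2 :=
      Finset.mul_prod_erase Finset.univ (fun k => w k ^ 2) (Finset.mem_univ i)
    have h2 : δ = ∏ k, w k ^ 3 := by
      rw [hδ]; exact Finset.prod_congr rfl fun k _ => hv k
    calc v i * c i ^ 3
        = (w i ^ 2 * ∏ k ∈ Finset.univ.erase i, w k ^ 2) ^ 3 := by
          rw [hv i]; simp only [hc]; ring
      _ = (∏ k, w k ^ 2) ^ 3 := by rw [h1]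
      _ = ((∏ k, w k) ^ 2) ^ 3 := by rw [Finset.prod_pow]
      _ = ((∏ k, w k) ^ 3) ^ 2 := by ring
      _ = δ ^ 2 := by rw [h2, Finset.prod_pow]
  have ha' : ∀ i j, a i j = c i * (v j * b i j) := by
    intro i j
    rw [ha i j, hv j]; simp only [hc]; ring
  have hvent : ∀ i j, v i * c i ^ 2 * a i j = δ ^ 2 * (b i j * v j) := by
    intro i j
    rw [ha' i j]
    linear_combination (v j * b i j) * hkey i
  constructor
  · -- Keller part
    set K := MvPolynomial (Fin n) ℚ
    set U : Fin n → K := fun i => ∑ l, C (((v l * b i l : ℤ) : ℚ)) * X l with hU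
    set A : Matrix (Fin n) (Fin n) K := Matrix.of fun i j =>
      (if i = j then 1 else 0) + 3 * (C ((c i : ℚ)) * U i) ^ 2 * C ((a i j : ℚ)) with hA
    set B' : Matrix (Fin n) (Fin n) K := Matrix.of fun i j =>
      (if i = j then 1 else 0) + 3 * (C ((δ : ℚ)) * U i) ^ 2 * C ((b i j : ℚ)) with hB'
    set φ : MvPolynomial (Fin n) ℤ →+* K :=
      ((aeval fun l => C (((δ * v l : ℤ) : ℚ)) * X l :
        MvPolynomial (Fin n) ℤ →ₐ[ℤ] K)).toRingHom with hφ
    have hCz : ∀ z : ℤ, φ (C z) = C ((z : ℚ)) := by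
      intro z
      rw [hφ]
      show (aeval fun l => C (((δ * v l : ℤ) : ℚ)) * X l) (C z) = C ((z : ℚ))
      rw [aeval_C, eq_intCast (algebraMap ℤ (MvPolynomial (Fin n) ℚ)) z]
      exact (map_intCast (C : ℚ →+* K) z).symm
    have hφX : ∀ l, φ (X l) = C (((δ * v l : ℤ) : ℚ)) * X l := by
      intro l; rw [hφ]; exact aeval_X _ l
    have hφS : ∀ i, φ (∑ l, C (b i l) * X l) = C ((δ : ℚ)) * U i := by
      intro i
      rw [map_sum, hU, Finset.mul_sum]
      refine Finset.sum_congr rfl fun l _ => ?_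
      rw [map_mul, hCz, hφX]
      exact C_mul_X_eq (by push_cast; ring) l
    have hmapB : (Matrix.of fun i j => pderiv j (cubicLinear b i)).map φ = B' := by
      ext i j
      rw [Matrix.map_apply, Matrix.of_apply, pderiv_cubicLinear, hB']
      rw [map_add, map_mul, map_mul, map_pow, hφS, hCz, map_ofNat, apply_ite φ, map_one,
        map_zero]
      rfl
    have hdetB : B'.det = 1 := by
      rw [← hmapB, ← RingHom.mapMatrix_apply, ← RingHom.map_det, hF, map_one]
    set ψ : MvPolynomial (Fin n) ℤ →+* K := MvPolynomial.map (Int.castRingHom ℚ) with hψ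
    have hψC : ∀ z : ℤ, ψ (C z) = C ((z : ℚ)) := fun z => map_C _ z
    have hmapA : (Matrix.of fun i j => pderiv j (cubicLinear a i)).map ψ = A := by
      ext i j
      rw [Matrix.map_apply, Matrix.of_apply, pderiv_cubicLinear, hA]
      rw [map_add, map_mul, map_mul, map_pow, map_sum, hψC, map_ofNat, apply_ite ψ, map_one,
        map_zero]
      have hs : (∑ l, ψ (C (a i l) * X l)) = C ((c i : ℚ)) * U i := by
        rw [hU, Finset.mul_sum]
        refine Finset.sum_congr rfl fun l _ => ?_
        rw [map_mul, hψC, MvPolynomial.map_X]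
        exact C_mul_X_eq' (by rw [ha' i l]; push_cast; ring) l
      rw [hs]
      rfl
    have hD : ∀ (i : Fin n), (C ((v i : ℚ)) : K) ≠ 0 := by
      intro i
      have hvi : v i ≠ 0 := by rw [hv i]; exact pow_ne_zero _ (hw i)
      simpa [MvPolynomial.C_eq_zero] using (Int.cast_ne_zero (α := ℚ)).mpr hvi
    have hconj : Matrix.diagonal (fun i => (C ((v i : ℚ)) : K)) * A =
        B' * Matrix.diagonal (fun i => (C ((v i : ℚ)) : K)) := by
      refine Matrix.ext fun i j => ?_
      rw [Matrix.diagonal_mul, Matrix.mul_diagonal, hA, hB']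
      show C ((v i : ℚ)) * ((if i = j then 1 else 0) + 3 * (C ((c i : ℚ)) * U i) ^ 2 * C ((a i j : ℚ)))
        = ((if i = j then 1 else 0) + 3 * (C ((δ : ℚ)) * U i) ^ 2 * C ((b i j : ℚ))) * C ((v j : ℚ))
      have e1 : C ((v i : ℚ)) * ((if i = j then (1:K) else 0))
          = ((if i = j then 1 else 0)) * C ((v j : ℚ)) := by
        rcases eq_or_ne i j with h | h
        · subst h; simp [mul_comm]
        · simp [h]
      have hq : (v i : ℚ) * (c i : ℚ) ^ 2 * (a i j : ℚ) = (δ : ℚ) ^ 2 * ((b i j : ℚ) * (v j : ℚ)) := by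
        exact_mod_cast hvent i j
      have e2 : C ((v i : ℚ)) * (3 * (C ((c i : ℚ)) * U i) ^ 2 * C ((a i j : ℚ)))
          = (3 * (C ((δ : ℚ)) * U i) ^ 2 * C ((b i j : ℚ))) * C ((v j : ℚ)) := by
        have l1 : C ((v i : ℚ)) * (3 * (C ((c i : ℚ)) * U i) ^ 2 * C ((a i j : ℚ)))
            = 3 * U i ^ 2 * C ((v i : ℚ) * (c i : ℚ) ^ 2 * (a i j : ℚ)) := by
          rw [map_mul, map_mul, map_pow]; ring
        have l2 : (3 * (C ((δ : ℚ)) * U i) ^ 2 * C ((b i j : ℚ))) * C ((v j : ℚ))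
            = 3 * U i ^ 2 * C ((δ : ℚ) ^ 2 * ((b i j : ℚ) * (v j : ℚ))) := by
          rw [map_mul, map_mul, map_pow]; ring
        rw [l1, l2, hq]
      rw [mul_add, add_mul, e1, e2]
    have hdetD : (Matrix.diagonal (fun i => (C ((v i : ℚ)) : K))).det ≠ 0 := by
      rw [Matrix.det_diagonal]
      exact Finset.prod_ne_zero_iff.mpr fun i _ => hD i
    have hdetA : A.det = 1 := by
      have h := congrArg Matrix.det hconj
      rw [Matrix.det_mul, Matrix.det_mul, hdetB, one_mul] at h
      exact mul_left_cancel₀ hdetD (by rw [mul_one]; exact h)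
    have hψinj : Function.Injective ψ :=
      MvPolynomial.map_injective (Int.castRingHom ℚ) Int.cast_injective
    apply hψinj
    rw [RingHom.map_det, RingHom.mapMatrix_apply, hmapA, hdetA, map_one]
  · -- evaluation part
    intro x hx
    have heval : ∀ i, eval (fun k => δ * v k * x k) (cubicLinear b i)
        = δ * v i * eval x (cubicLinear a i) := by
      intro i
      simp only [cubicLinear, eval_add, eval_pow, eval_sum, eval_mul, eval_C, eval_X]
      have hs1 : ∑ j, b i j * (δ * v j * x j) = δ * ∑ j, v j * b i j * x j := by
        rw [Finset.mul_sum]; exact Finset.sum_congr rfl fun j _ => by ring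
      have hs2 : ∑ j, a i j * x j = c i * ∑ j, v j * b i j * x j := by
        rw [Finset.mul_sum]; exact Finset.sum_congr rfl fun j _ => by rw [ha' i j]; ring
      rw [hs1, hs2]
      linear_combination (-(δ * (∑ j, v j * b i j * x j) ^ 3)) * hkey i
    rcases isEmpty_or_nonempty (Fin n) with h | h
    · exact ⟨0, fun i => (h.false i).elim⟩
    · obtain ⟨i₀⟩ := h
      refine ⟨((δ * eval x (cubicLinear a i₀) : ℤ) : ℚ), fun i => ?_⟩
      rw [heval i, hx i i₀]
      push_cast
      ring
end
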